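/- Let Ξ ⊆ ℝ^k be a Borel set, P and Q Borel probability measures on Ξ with finite first moments, M a positive integer, c ≥ 0, and F : Ξ^M → ℝ^N a map satisfying ‖F(x¹,…,x^M) − F(y¹,…,y^M)‖ ≤ (c/M) Σ_{i=1}^M ‖x^i − y^i‖ for all (x¹,…,x^M), (y¹,…,y^M) ∈ Ξ^M (so F is continuous, hence Borel measurable). Then the pushforwards of the product measures under F satisfy dl_K( P^{⊗M} ∘ F⁻¹ , Q^{⊗M} ∘ F⁻¹ ) ≤ c · dl_K(P, Q). -/

import Mathlib

open MeasureTheory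

noncomputable def Kdist {E : Type*} [MeasurableSpace E] [NormedAddCommGroup E]
    (μ ν : Measure E) : ℝ :=
  sSup {x : ℝ | ∃ g : E → ℝ, (∀ a b : E, |g a - g b| ≤ ‖a - b‖) ∧
    x = |(∫ y, g y ∂μ) - ∫ y, g y ∂ν|}

set_option linter.unusedSectionVars false

section Aux
variable {E : Type*} [MeasurableSpace E] [NormedAddCommGroup E] [BorelSpace E]
  [SecondCountableTopology E]

private lemma lip_cont {m : ℕ} {L : ℝ} (hL : 0 ≤ L) (H : (Fin m → E) → ℝ)
    (hH : ∀ x y, |H x - H y| ≤ L * ∑ i, ‖x i - y i‖) : Continuous H := by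
  have : LipschitzWith ⟨L * m, by positivity⟩ H := by
    apply LipschitzWith.of_dist_le_mul
    intro x y
    rw [Real.dist_eq]
    refine (hH x y).trans ?_
    have h1 : ∑ i, ‖x i - y i‖ ≤ ∑ _i : Fin m, dist x y := by
      refine Finset.sum_le_sum fun i _ => ?_
      rw [← dist_eq_norm]
      exact dist_le_pi_dist x y i
    have h2 : L * ∑ i, ‖x i - y i‖ ≤ L * ∑ _i : Fin m, dist x y :=
      mul_le_mul_of_nonneg_left h1 hL
    refine h2.trans (le_of_eq ?_)
    show L * ∑ _i : Fin m, dist x y = L * m * dist x y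
    rw [Finset.sum_const, Finset.card_univ, Fintype.card_fin, nsmul_eq_mul]; ring
  exact this.continuous

private lemma lip_cont' {L : ℝ} (hL : 0 ≤ L) (h : E → ℝ)
    (hh : ∀ a b : E, |h a - h b| ≤ L * ‖a - b‖) : Continuous h := by
  have : LipschitzWith ⟨L, hL⟩ h := by
    apply LipschitzWith.of_dist_le_mul
    intro a b
    rw [Real.dist_eq, dist_eq_norm]
    exact hh a b
  exact this.continuous

private lemma lip_integrable {L : ℝ}
    (P : Measure E) [IsProbabilityMeasure P]
    (hmom : Integrable (fun ξ => ‖ξ‖) P)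
    (h : E → ℝ) (hcont : Continuous h)
    (hh : ∀ a b : E, |h a - h b| ≤ L * ‖a - b‖) : Integrable h P := by
  refine Integrable.mono' ((integrable_const |h 0|).add (hmom.const_mul L))
    hcont.aestronglyMeasurable ?_
  filter_upwards with ξ
  have h1 := hh ξ 0
  rw [sub_zero] at h1
  have h3 : |h ξ| ≤ |h 0| + |h ξ - h 0| := by
    have := abs_add_le (h 0) (h ξ - h 0); simpa using this
  calc ‖h ξ‖ = |h ξ| := rfl
    _ ≤ |h 0| + L * ‖ξ‖ := by linarith

private lemma kdist_bddAbove
    (P Q : Measure E) [IsProbabilityMeasure P] [IsProbabilityMeasure Q]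
    (hmomP : Integrable (fun ξ => ‖ξ‖) P) (hmomQ : Integrable (fun ξ => ‖ξ‖) Q) :
    BddAbove {x : ℝ | ∃ g : E → ℝ, (∀ a b : E, |g a - g b| ≤ ‖a - b‖) ∧
      x = |(∫ y, g y ∂P) - ∫ y, g y ∂Q|} := by
  refine ⟨(∫ ξ, ‖ξ‖ ∂P) + ∫ ξ, ‖ξ‖ ∂Q, ?_⟩
  rintro x ⟨g, hg, rfl⟩
  have hg1 : ∀ a b : E, |g a - g b| ≤ 1 * ‖a - b‖ := by simpa using hg
  have hgc : Continuous g := lip_cont' zero_le_one g hg1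
  have hiP : Integrable g P := lip_integrable P hmomP g hgc hg1
  have hiQ : Integrable g Q := lip_integrable Q hmomQ g hgc hg1
  -- replace g by g - g 0
  have keyP : ∫ y, g y ∂P - g 0 = ∫ y, (g y - g 0) ∂P := by
    rw [integral_sub hiP (integrable_const (g 0))]; simp
  have keyQ : ∫ y, g y ∂Q - g 0 = ∫ y, (g y - g 0) ∂Q := by
    rw [integral_sub hiQ (integrable_const (g 0))]; simp
  have hbP : |∫ y, (g y - g 0) ∂P| ≤ ∫ ξ, ‖ξ‖ ∂P := by
    have h0 := norm_integral_le_integral_norm (μ := P) (fun y => g y - g 0)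
    simp only [Real.norm_eq_abs] at h0
    refine h0.trans ?_
    refine integral_mono (hiP.sub (integrable_const _)).abs hmomP fun ξ => ?_
    simpa using hg ξ 0
  have hbQ : |∫ y, (g y - g 0) ∂Q| ≤ ∫ ξ, ‖ξ‖ ∂Q := by
    have h0 := norm_integral_le_integral_norm (μ := Q) (fun y => g y - g 0)
    simp only [Real.norm_eq_abs] at h0
    refine h0.trans ?_
    refine integral_mono (hiQ.sub (integrable_const _)).abs hmomQ fun ξ => ?_
    simpa using hg ξ 0
  have : |(∫ y, g y ∂P) - ∫ y, g y ∂Q|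
      = |(∫ y, (g y - g 0) ∂P) - ∫ y, (g y - g 0) ∂Q| := by
    rw [← keyP, ← keyQ]; ring_nf
  rw [this]
  calc |(∫ y, (g y - g 0) ∂P) - ∫ y, (g y - g 0) ∂Q|
      ≤ |∫ y, (g y - g 0) ∂P| + |∫ y, (g y - g 0) ∂Q| := abs_sub _ _
    _ ≤ (∫ ξ, ‖ξ‖ ∂P) + ∫ ξ, ‖ξ‖ ∂Q := add_le_add hbP hbQ

private lemma kdist_nonneg
    (P Q : Measure E) [IsProbabilityMeasure P] [IsProbabilityMeasure Q]
    (hmomP : Integrable (fun ξ => ‖ξ‖) P) (hmomQ : Integrable (fun ξ => ‖ξ‖) Q) :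
    0 ≤ Kdist P Q := by
  refine le_csSup (kdist_bddAbove P Q hmomP hmomQ) ?_
  exact ⟨fun _ => 0, by simp, by simp⟩

private lemma lip_pair_bound
    (P Q : Measure E) [IsProbabilityMeasure P] [IsProbabilityMeasure Q]
    (hmomP : Integrable (fun ξ => ‖ξ‖) P) (hmomQ : Integrable (fun ξ => ‖ξ‖) Q)
    {L : ℝ} (hL : 0 ≤ L) (h : E → ℝ)
    (hh : ∀ a b : E, |h a - h b| ≤ L * ‖a - b‖) :
    |(∫ y, h y ∂P) - ∫ y, h y ∂Q| ≤ L * Kdist P Q := by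
  rcases eq_or_lt_of_le hL with hL0 | hLpos
  · -- L = 0 : h is constant
    have hconst : ∀ a : E, h a = h 0 := fun a => by
      have := hh a 0; rw [← hL0] at this
      simp only [zero_mul] at this
      have := abs_nonpos_iff.mp (le_antisymm this (abs_nonneg _)).le
      linarith [sub_eq_zero.mp this]
    have : (fun y : E => h y) = fun _ => h 0 := funext hconst
    rw [this]
    simp only [integral_const, measure_univ, probReal_univ, ENNReal.toReal_one, smul_eq_mul, one_mul,
      sub_self, abs_zero]
    rw [← hL0, zero_mul]
  · set g : E → ℝ := fun ξ => h ξ / L with hgdef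
    have hg : ∀ a b : E, |g a - g b| ≤ ‖a - b‖ := by
      intro a b
      rw [hgdef]
      simp only [div_sub_div_same]
      rw [abs_div, abs_of_pos hLpos, div_le_iff₀ hLpos, mul_comm]
      exact hh a b
    have hmem : |(∫ y, g y ∂P) - ∫ y, g y ∂Q| ∈
        {x : ℝ | ∃ g' : E → ℝ, (∀ a b : E, |g' a - g' b| ≤ ‖a - b‖) ∧
          x = |(∫ y, g' y ∂P) - ∫ y, g' y ∂Q|} := ⟨g, hg, rfl⟩
    have hle : |(∫ y, g y ∂P) - ∫ y, g y ∂Q| ≤ Kdist P Q :=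
      le_csSup (kdist_bddAbove P Q hmomP hmomQ) hmem
    have hPg : ∫ y, g y ∂P = (∫ y, h y ∂P) / L := by rw [hgdef]; exact integral_div L _
    have hQg : ∫ y, g y ∂Q = (∫ y, h y ∂Q) / L := by rw [hgdef]; exact integral_div L _
    rw [hPg, hQg, div_sub_div_same, abs_div, abs_of_pos hLpos, div_le_iff₀ hLpos] at hle
    linarith [hle]

private lemma eval_mp {m : ℕ} (i : Fin m)
    (P : Measure E) [IsProbabilityMeasure P] :
    MeasurePreserving (fun x : Fin m → E => x i) (Measure.pi fun _ => P) P := by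
  refine ⟨measurable_pi_apply i, ?_⟩
  refine Measure.ext fun s hs => ?_
  rw [Measure.map_apply (measurable_pi_apply i) hs]
  have hpre : (fun x : Fin m → E => x i) ⁻¹' s
      = Set.pi Set.univ (Function.update (fun _ : Fin m => (Set.univ : Set E)) i s) := by
    ext x
    simp [Function.update_apply]
  rw [hpre, Measure.pi_pi]
  simp [Function.update_apply, apply_ite, measure_univ]

private lemma sum_norm_integrable (m : ℕ)
    (P : Measure E) [IsProbabilityMeasure P]
    (hmom : Integrable (fun ξ => ‖ξ‖) P) :
    Integrable (fun x : Fin m → E => ∑ i, ‖x i‖) (Measure.pi fun _ => P) := by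
  refine integrable_finset_sum _ fun i _ => ?_
  exact (eval_mp i P).integrable_comp hmom.aestronglyMeasurable |>.mpr hmom


private lemma main_induction
    (P Q : Measure E) [IsProbabilityMeasure P] [IsProbabilityMeasure Q]
    (hmomP : Integrable (fun ξ => ‖ξ‖) P) (hmomQ : Integrable (fun ξ => ‖ξ‖) Q) :
    ∀ (m : ℕ) (L : ℝ), 0 ≤ L → ∀ H : (Fin m → E) → ℝ,
      (∀ x y, |H x - H y| ≤ L * ∑ i, ‖x i - y i‖) →
      |(∫ x, H x ∂(Measure.pi fun _ : Fin m => P))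
        - ∫ x, H x ∂(Measure.pi fun _ : Fin m => Q)| ≤ m * L * Kdist P Q := by
  intro m
  induction m with
  | zero =>
    intro L hL H hH
    rw [integral_unique, integral_unique]
    simp [measure_univ]
  | succ m ih =>
    intro L hL H hH
    have hHcont : Continuous H := lip_cont hL H hH
    have habs : ∀ z : Fin (m+1) → E, |H z| ≤ |H 0| + L * ∑ i, ‖z i‖ := by
      intro z
      have h1 := hH z 0
      simp only [Pi.zero_apply, sub_zero] at h1
      have h2 : |H z| ≤ |H 0| + |H z - H 0| := by
        have := abs_add_le (H 0) (H z - H 0); simpa using this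
      linarith
    set e := MeasurableEquiv.piFinSuccAbove (fun _ : Fin (m+1) => E) 0 with he
    have hes : ∀ (a : E) (x : Fin m → E), e.symm (a, x) = Fin.cons a x := by
      intro a x
      simp [he, MeasurableEquiv.piFinSuccAbove, Fin.insertNth_zero', Fin.consEquiv]
    have hconsm : ∀ a : E,
        Measurable (fun x : Fin m → E => (Fin.cons a x : Fin (m+1) → E)) := by
      intro a
      refine measurable_pi_iff.mpr fun i => ?_
      refine Fin.cases ?_ ?_ i
      · simpa using measurable_const
      · intro j; simpa using measurable_pi_apply j
    have hsum_cons : ∀ (a : E) (x : Fin m → E),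
        ∑ i : Fin (m+1), ‖(Fin.cons a x : Fin (m+1) → E) i‖ = ‖a‖ + ∑ j, ‖x j‖ := by
      intro a x
      simp [Fin.sum_univ_succ]
    -- key iterated-integral identity
    have key : ∀ (ρ : Measure E) (_ : IsProbabilityMeasure ρ),
        Integrable (fun ξ => ‖ξ‖) ρ →
        (∫ x, H x ∂(Measure.pi fun _ : Fin (m+1) => ρ))
          = ∫ a, (∫ x, H (Fin.cons a x) ∂(Measure.pi fun _ : Fin m => ρ)) ∂ρ := by
      intro ρ hρ hmomρ
      haveI := hρ
      set ρm := Measure.pi fun _ : Fin m => ρ with hρm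
      have h1 : (Measure.pi fun _ : Fin (m+1) => ρ)
          = Measure.map e.symm (ρ.prod ρm) :=
        (((measurePreserving_piFinSuccAbove (fun _ : Fin (m+1) => ρ) 0).symm e).map_eq).symm
      rw [h1, integral_map_equiv]
      have mpfst : MeasurePreserving (Prod.fst) (ρ.prod ρm) ρ :=
        ⟨measurable_fst, by simp [Measure.map_fst_prod, measure_univ]⟩
      have mpsnd : MeasurePreserving (Prod.snd) (ρ.prod ρm) ρm :=
        ⟨measurable_snd, by simp [Measure.map_snd_prod, measure_univ]⟩
      have int_fst : Integrable (fun p : E × (Fin m → E) => ‖p.1‖) (ρ.prod ρm) :=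
        (mpfst.integrable_comp hmomρ.aestronglyMeasurable).mpr hmomρ
      have int_snd : Integrable (fun p : E × (Fin m → E) => ∑ i, ‖p.2 i‖) (ρ.prod ρm) :=
        (mpsnd.integrable_comp (sum_norm_integrable m ρ hmomρ).aestronglyMeasurable).mpr
          (sum_norm_integrable m ρ hmomρ)
      have hint : Integrable (fun p : E × (Fin m → E) => H (e.symm p)) (ρ.prod ρm) := by
        refine Integrable.mono'
          ((integrable_const |H 0|).add ((int_fst.add int_snd).const_mul L))
          ((hHcont.measurable.comp e.symm.measurable).aestronglyMeasurable) ?_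
        filter_upwards with p
        have h2 := habs (e.symm p)
        have h3 : e.symm p = Fin.cons p.1 p.2 := by rw [← hes p.1 p.2]
        rw [h3] at h2 ⊢
        rw [hsum_cons] at h2
        simpa [Real.norm_eq_abs, mul_add] using h2
      rw [integral_prod _ hint]
      simp only [hes]
    -- the two marginal functions
    set HA : E → ℝ := fun a => ∫ x, H (Fin.cons a x) ∂(Measure.pi fun _ : Fin m => P)
      with hHA
    set HB : E → ℝ := fun a => ∫ x, H (Fin.cons a x) ∂(Measure.pi fun _ : Fin m => Q)
      with hHB
    have hinner : ∀ (a : E) (x y : Fin m → E),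
        |H (Fin.cons a x) - H (Fin.cons a y)| ≤ L * ∑ i, ‖x i - y i‖ := by
      intro a x y
      have := hH (Fin.cons a x) (Fin.cons a y)
      simpa [Fin.sum_univ_succ] using this
    have hinnerInt : ∀ (a : E) (ρ : Measure E) (_ : IsProbabilityMeasure ρ),
        Integrable (fun ξ => ‖ξ‖) ρ →
        Integrable (fun x => H (Fin.cons a x)) (Measure.pi fun _ : Fin m => ρ) := by
      intro a ρ hρ hmomρ
      haveI := hρ
      refine Integrable.mono'
        ((integrable_const (|H 0| + L * ‖a‖)).add ((sum_norm_integrable m ρ hmomρ).const_mul L))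
        ((hHcont.measurable.comp (hconsm a)).aestronglyMeasurable) ?_
      filter_upwards with x
      have h2 := habs (Fin.cons a x)
      rw [hsum_cons] at h2
      simp only [Real.norm_eq_abs]
      calc |H (Fin.cons a x)| ≤ |H 0| + L * (‖a‖ + ∑ j, ‖x j‖) := h2
        _ = |H 0| + L * ‖a‖ + L * ∑ j, ‖x j‖ := by ring
    -- pointwise bound from induction hypothesis
    have hAB : ∀ a : E, |HA a - HB a| ≤ m * L * Kdist P Q := fun a =>
      ih L hL (fun x => H (Fin.cons a x)) (hinner a)
    -- Lipschitz property of HA and HB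
    have hlip : ∀ (ρ : Measure E) (_ : IsProbabilityMeasure ρ),
        Integrable (fun ξ => ‖ξ‖) ρ →
        ∀ a b : E, |(∫ x, H (Fin.cons a x) ∂(Measure.pi fun _ : Fin m => ρ))
          - ∫ x, H (Fin.cons b x) ∂(Measure.pi fun _ : Fin m => ρ)| ≤ L * ‖a - b‖ := by
      intro ρ hρ hmomρ a b
      haveI := hρ
      have hdiff : ∀ x : Fin m → E, |H (Fin.cons a x) - H (Fin.cons b x)| ≤ L * ‖a - b‖ := by
        intro x
        have := hH (Fin.cons a x) (Fin.cons b x)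
        simpa [Fin.sum_univ_succ] using this
      rw [← integral_sub (hinnerInt a ρ hρ hmomρ) (hinnerInt b ρ hρ hmomρ)]
      have h4 := norm_integral_le_integral_norm (μ := Measure.pi fun _ : Fin m => ρ)
        (fun x => H (Fin.cons a x) - H (Fin.cons b x))
      simp only [Real.norm_eq_abs] at h4
      refine h4.trans ?_
      calc ∫ x, |H (Fin.cons a x) - H (Fin.cons b x)| ∂(Measure.pi fun _ : Fin m => ρ)
          ≤ ∫ _x, L * ‖a - b‖ ∂(Measure.pi fun _ : Fin m => ρ) :=
            integral_mono (((hinnerInt a ρ hρ hmomρ).sub (hinnerInt b ρ hρ hmomρ)).abs)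
              (integrable_const _) hdiff
        _ = L * ‖a - b‖ := by simp [measure_univ]
    have hAlip : ∀ a b : E, |HA a - HA b| ≤ L * ‖a - b‖ := fun a b =>
      hlip P ‹_› hmomP a b
    have hBlip : ∀ a b : E, |HB a - HB b| ≤ L * ‖a - b‖ := fun a b =>
      hlip Q ‹_› hmomQ a b
    have hAcont : Continuous HA := lip_cont' hL HA hAlip
    have hBcont : Continuous HB := lip_cont' hL HB hBlip
    have intA_P : Integrable HA P := lip_integrable P hmomP HA hAcont hAlip
    have intB_P : Integrable HB P := lip_integrable P hmomP HB hBcont hBlip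
    rw [key P ‹_› hmomP, key Q ‹_› hmomQ]
    show |(∫ a, HA a ∂P) - ∫ a, HB a ∂Q| ≤ _
    have t1 : |(∫ a, HA a ∂P) - ∫ a, HB a ∂P| ≤ m * L * Kdist P Q := by
      rw [← integral_sub intA_P intB_P]
      have h5 := norm_integral_le_integral_norm (μ := P) (fun a => HA a - HB a)
      simp only [Real.norm_eq_abs] at h5
      refine h5.trans ?_
      calc ∫ a, |HA a - HB a| ∂P ≤ ∫ _a, (m * L * Kdist P Q) ∂P :=
            integral_mono ((intA_P.sub intB_P).abs) (integrable_const _) hAB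
        _ = m * L * Kdist P Q := by simp [measure_univ]
    have t2 : |(∫ a, HB a ∂P) - ∫ a, HB a ∂Q| ≤ L * Kdist P Q :=
      lip_pair_bound P Q hmomP hmomQ hL HB hBlip
    have tri : |(∫ a, HA a ∂P) - ∫ a, HB a ∂Q|
        ≤ |(∫ a, HA a ∂P) - ∫ a, HB a ∂P| + |(∫ a, HB a ∂P) - ∫ a, HB a ∂Q| :=
      abs_sub_le _ _ _
    push_cast
    have hring : ((m : ℝ) + 1) * L * Kdist P Q = m * L * Kdist P Q + L * Kdist P Q := by
      ring
    rw [hring]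
    linarith

end Aux

/-- if `F : Ξ^M → ℝ^N` satisfies
`‖F(x) − F(y)‖ ≤ (c/M) Σᵢ ‖xⁱ − yⁱ‖` on `Ξ^M`, then the pushforwards of the product
measures satisfy `dl_K(P^{⊗M} ∘ F⁻¹, Q^{⊗M} ∘ F⁻¹) ≤ c · dl_K(P, Q)`. -/
theorem kantorovich_pushforward_bound (k N : ℕ)
    (Ξ : Set (EuclideanSpace ℝ (Fin k))) (hΞ : MeasurableSet Ξ)
    (P Q : Measure (EuclideanSpace ℝ (Fin k)))
    [IsProbabilityMeasure P] [IsProbabilityMeasure Q]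
    (hPΞ : P Ξᶜ = 0) (hQΞ : Q Ξᶜ = 0)
    (hmomP : Integrable (fun ξ => ‖ξ‖) P) (hmomQ : Integrable (fun ξ => ‖ξ‖) Q)
    (M : ℕ) (hM : 0 < M) (c : ℝ) (hc : 0 ≤ c)
    (F : (Fin M → EuclideanSpace ℝ (Fin k)) → EuclideanSpace ℝ (Fin N))
    (hF : ∀ x y : Fin M → EuclideanSpace ℝ (Fin k),
      (∀ i, x i ∈ Ξ) → (∀ i, y i ∈ Ξ) →
      ‖F x - F y‖ ≤ (c / M) * ∑ i : Fin M, ‖x i - y i‖) :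
    Kdist (Measure.map F (Measure.pi fun _ : Fin M => P))
        (Measure.map F (Measure.pi fun _ : Fin M => Q)) ≤ c * Kdist P Q := by
  have hMR : (0:ℝ) < M := by exact_mod_cast hM
  set L : ℝ := c / M with hLdef
  have hL : 0 ≤ L := div_nonneg hc hMR.le
  set Pm := Measure.pi fun _ : Fin M => P with hPm
  set Qm := Measure.pi fun _ : Fin M => Q with hQm
  set s : Set (Fin M → EuclideanSpace ℝ (Fin k)) := Set.pi Set.univ (fun _ => Ξ) with hsdef
  have hsmeas : MeasurableSet s := MeasurableSet.univ_pi fun _ => hΞ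
  have hmem : ∀ x : Fin M → EuclideanSpace ℝ (Fin k), x ∈ s ↔ ∀ i, x i ∈ Ξ := by
    intro x; simp [hsdef, Set.mem_pi]
  have hPΞ1 : P Ξ = 1 := (prob_compl_eq_zero_iff hΞ).mp hPΞ
  have hQΞ1 : Q Ξ = 1 := (prob_compl_eq_zero_iff hΞ).mp hQΞ
  have hPmsc : Pm sᶜ = 0 := by
    rw [prob_compl_eq_zero_iff hsmeas, hPm, hsdef, Measure.pi_pi]
    simp [hPΞ1]
  have hQmsc : Qm sᶜ = 0 := by
    rw [prob_compl_eq_zero_iff hsmeas, hQm, hsdef, Measure.pi_pi]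
    simp [hQΞ1]
  have haeP : ∀ᵐ x ∂Pm, x ∈ s := by rw [ae_iff]; exact hPmsc
  have haeQ : ∀ᵐ x ∂Qm, x ∈ s := by rw [ae_iff]; exact hQmsc
  -- F is continuous on s
  have hFcont : ContinuousOn F s := by
    have : LipschitzOnWith ⟨c, hc⟩ F s := by
      apply LipschitzOnWith.of_dist_le_mul
      intro x hx y hy
      rw [dist_eq_norm]
      refine (hF x y ((hmem x).mp hx) ((hmem y).mp hy)).trans ?_
      have h1 : ∑ i, ‖x i - y i‖ ≤ ∑ _i : Fin M, dist x y := by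
        refine Finset.sum_le_sum fun i _ => ?_
        rw [← dist_eq_norm]; exact dist_le_pi_dist x y i
      have h2 : (c / M) * ∑ i, ‖x i - y i‖ ≤ (c / M) * (M * dist x y) := by
        refine mul_le_mul_of_nonneg_left ?_ hL
        simpa [Finset.sum_const, mul_comm] using h1
      refine h2.trans ?_
      rw [div_mul_eq_mul_div, mul_comm (c : ℝ) ((M : ℝ) * dist x y)]
      rw [mul_assoc, mul_comm ((M:ℝ)) (dist x y * c)]
      field_simp
      exact le_of_eq rfl
    exact this.continuousOn
  have hFaeP : AEMeasurable F Pm := by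
    have h0 := hFcont.aemeasurable (μ := Pm) hsmeas
    rwa [Measure.restrict_eq_self_of_ae_mem haeP] at h0
  have hFaeQ : AEMeasurable F Qm := by
    have h0 := hFcont.aemeasurable (μ := Qm) hsmeas
    rwa [Measure.restrict_eq_self_of_ae_mem haeQ] at h0
  -- main bound
  refine Real.sSup_le ?_ (mul_nonneg hc (kdist_nonneg P Q hmomP hmomQ))
  rintro x ⟨g, hg, rfl⟩
  have hg1 : ∀ a b : EuclideanSpace ℝ (Fin N), |g a - g b| ≤ 1 * ‖a - b‖ := by
    simpa using hg
  have hgc : Continuous g := lip_cont' zero_le_one g hg1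
  -- extend g ∘ F from s to a globally L1-Lipschitz function
  have hGlip : LipschitzOnWith ⟨L, hL⟩
      (fun x : PiLp 1 (fun _ : Fin M => EuclideanSpace ℝ (Fin k)) => g (F x))
      {x : PiLp 1 (fun _ : Fin M => EuclideanSpace ℝ (Fin k)) | ∀ i, x i ∈ Ξ} := by
    apply LipschitzOnWith.of_dist_le_mul
    intro x hx y hy
    rw [Real.dist_eq]
    calc |g (F x) - g (F y)| ≤ ‖F x - F y‖ := hg _ _
      _ ≤ L * ∑ i, ‖x i - y i‖ := hF x y hx hy
      _ = (⟨L, hL⟩ : NNReal) * dist x y := by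
          rw [PiLp.dist_eq_sum (by norm_num : 0 < (1 : ENNReal).toReal)]
          simp [dist_eq_norm]
  obtain ⟨Ht, hHtlip, hHteq⟩ := hGlip.extend_real
  set H : (Fin M → EuclideanSpace ℝ (Fin k)) → ℝ := fun x => Ht (WithLp.toLp 1 x) with hHdef
  have hH : ∀ x y : Fin M → EuclideanSpace ℝ (Fin k),
      |H x - H y| ≤ L * ∑ i, ‖x i - y i‖ := by
    intro x y
    have h0 := hHtlip.dist_le_mul (WithLp.toLp 1 x) (WithLp.toLp 1 y)
    rw [Real.dist_eq] at h0
    refine h0.trans ?_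
    rw [PiLp.dist_eq_sum (by norm_num : 0 < (1 : ENNReal).toReal)]
    simp [dist_eq_norm]
    exact le_of_eq rfl
  -- convert the integrals
  have hcongr : ∀ x ∈ s, g (F x) = H x := fun x hx => hHteq ((hmem x).mp hx)
  have hmapP : ∫ y, g y ∂(Measure.map F Pm) = ∫ x, H x ∂Pm := by
    rw [integral_map hFaeP hgc.aestronglyMeasurable]
    exact integral_congr_ae ((haeP.mono) fun x hx => hcongr x hx)
  have hmapQ : ∫ y, g y ∂(Measure.map F Qm) = ∫ x, H x ∂Qm := by
    rw [integral_map hFaeQ hgc.aestronglyMeasurable]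
    exact integral_congr_ae ((haeQ.mono) fun x hx => hcongr x hx)
  rw [hmapP, hmapQ]
  have := main_induction P Q hmomP hmomQ M L hL H hH
  refine this.trans ?_
  have : (M : ℝ) * L * Kdist P Q = c * Kdist P Q := by
    rw [hLdef]; field_simp
  rw [this]
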